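/- Let X be a set of 120 unit vectors in ℝ^8 such that x ∈ X implies −x ∉ X, and such that for any distinct x, x' ∈ X the inner product ⟨x, x'⟩ lies in {0, 1/2, −1/2}. For x ∈ X put G_x = (xxᵀ − (1/8)I)/√(7/8), a unit vector in the 35-dimensional space of traceless symmetric 8×8 matrices with the Frobenius inner product. Then the 240 matrices {G_x : x ∈ X} ∪ {−G_x : x ∈ X} are pairwise distinct, the set is closed under negation, and for any two of these matrices M, M' with M ≠ M' and M ≠ −M' one has |⟨M, M'⟩_F| = 1/7. -/

import Mathlib

open RealInnerProductSpace Matrix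

private lemma trace_aux8 (x y : EuclideanSpace ℝ (Fin 8)) :
    (((Matrix.of fun i j => x i * x j) - (1/8:ℝ) • (1:Matrix (Fin 8) (Fin 8) ℝ))ᵀ *
     ((Matrix.of fun i j => y i * y j) - (1/8:ℝ) • 1)).trace
    = (∑ i, x i * y i)^2 - (1/8)*(∑ i, x i * x i) - (1/8)*(∑ i, y i * y i) + 1/8 := by
  simp [Matrix.trace, Matrix.mul_apply, Matrix.diag, Matrix.one_apply, mul_comm, mul_sub, sub_mul,
    Finset.sum_sub_distrib, Finset.mul_sum, Finset.sum_mul, mul_ite, ite_mul]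
  have h : ∑ i : Fin 8, ∑ j : Fin 8, x i * x j * (y i * y j) = (∑ i, x i * y i)^2 := by
    rw [sq, Finset.sum_mul_sum]
    exact Finset.sum_congr rfl fun i _ => Finset.sum_congr rfl fun j _ => by ring
  rw [h]; ring

theorem code_construction_in_harmonics
    (X : Finset (EuclideanSpace ℝ (Fin 8)))
    (hcard : X.card = 120)
    (hunit : ∀ x ∈ X, ‖x‖ = 1)
    (hnoanti : ∀ x ∈ X, -x ∉ X)
    (hinner : ∀ x ∈ X, ∀ x' ∈ X, x ≠ x' → ⟪x, x'⟫ ∈ ({0, 1 / 2, -(1 / 2)} : Set ℝ))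
    (G : EuclideanSpace ℝ (Fin 8) → Matrix (Fin 8) (Fin 8) ℝ)
    (hG : ∀ x, G x = (Real.sqrt (7 / 8))⁻¹ •
      ((Matrix.of fun i j => x i * x j) - (1 / 8 : ℝ) • (1 : Matrix (Fin 8) (Fin 8) ℝ)))
    (T : Finset (Matrix (Fin 8) (Fin 8) ℝ))
    (hT : T = X.image G ∪ X.image (fun x => -G x)) :
    T.card = 240 ∧
    (∀ M ∈ T, -M ∈ T) ∧
    (∀ M ∈ T, ∀ M' ∈ T, M ≠ M' → M ≠ -M' → |(Mᵀ * M').trace| = 1 / 7) := by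
  have c2 : ((Real.sqrt (7/8))⁻¹ : ℝ) * (Real.sqrt (7/8))⁻¹ = 8/7 := by
    rw [← mul_inv, Real.mul_self_sqrt (by norm_num : (0:ℝ) ≤ 7/8)]
    norm_num
  have hnorm : ∀ x ∈ X, ∑ i, x i * x i = 1 := by
    intro x hx
    have := real_inner_self_eq_norm_sq x
    rw [hunit x hx, PiLp.inner_apply] at this
    simp only [RCLike.inner_apply, conj_trivial, one_pow] at this
    exact this
  have key : ∀ x ∈ X, ∀ y ∈ X, ((G x)ᵀ * G y).trace = 8/7 * ⟪x, y⟫^2 - 1/7 := by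
    intro x hx y hy
    have hip : ⟪x, y⟫ = ∑ i, x i * y i := by
      simp [PiLp.inner_apply, RCLike.inner_apply, mul_comm]
    rw [hG, hG, Matrix.transpose_smul, Matrix.smul_mul, Matrix.mul_smul, Matrix.trace_smul,
      Matrix.trace_smul, smul_eq_mul, smul_eq_mul, ← mul_assoc, c2, trace_aux8,
      hnorm x hx, hnorm y hy, hip]
    ring
  have self : ∀ x ∈ X, ((G x)ᵀ * G x).trace = 1 := by
    intro x hx
    rw [key x hx x hx]
    have : ⟪x, x⟫ = 1 := by
      rw [real_inner_self_eq_norm_sq, hunit x hx]; norm_num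
    rw [this]; norm_num
  have hij : ∀ x ∈ X, ∀ y ∈ X, x ≠ y → |((G x)ᵀ * G y).trace| = 1/7 := by
    intro x hx y hy hne
    rw [key x hx y hy]
    rcases hinner x hx y hy hne with h | h | h <;> rw [h] <;> norm_num
  have hne_neg : ∀ x ∈ X, ∀ y ∈ X, G x ≠ -G y := by
    intro x hx y hy h
    have h1 : ((G x)ᵀ * G y).trace = -1 := by
      have h2 : ((G x)ᵀ * (-G y)).trace = 1 := by rw [← h]; exact self x hx
      rw [Matrix.mul_neg, Matrix.trace_neg] at h2
      linarith
    rcases eq_or_ne x y with rfl | hne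
    · rw [self x hx] at h1; norm_num at h1
    · have := hij x hx y hy hne
      rw [h1] at this; norm_num at this
  have hinjG : Set.InjOn G X := by
    intro x hx y hy h
    by_contra hne
    have h1 : ((G x)ᵀ * G y).trace = 1 := by rw [← h]; exact self x hx
    have := hij x hx y hy hne
    rw [h1] at this; norm_num at this
  have hinjN : Set.InjOn (fun x => -G x) X := by
    intro x hx y hy h
    exact hinjG hx hy (neg_injective h)
  have hdisj : Disjoint (X.image G) (X.image fun x => -G x) := by
    rw [Finset.disjoint_left]
    rintro M hM hM'
    obtain ⟨x, hx, rfl⟩ := Finset.mem_image.mp hM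
    obtain ⟨y, hy, hy2⟩ := Finset.mem_image.mp hM'
    exact hne_neg x hx y hy hy2.symm
  refine ⟨?_, ?_, ?_⟩
  · rw [hT, Finset.card_union_of_disjoint hdisj, Finset.card_image_of_injOn hinjG,
      Finset.card_image_of_injOn hinjN, hcard]
  · intro M hM
    rw [hT] at hM ⊢
    rcases Finset.mem_union.mp hM with h | h
    · obtain ⟨x, hx, rfl⟩ := Finset.mem_image.mp h
      exact Finset.mem_union_right _ (Finset.mem_image.mpr ⟨x, hx, rfl⟩)
    · obtain ⟨x, hx, rfl⟩ := Finset.mem_image.mp h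
      exact Finset.mem_union_left _ (Finset.mem_image.mpr ⟨x, hx, (neg_neg _).symm⟩)
  · intro M hM M' hM' h1 h2
    rw [hT] at hM hM'
    have getxy : ∀ N ∈ X.image G ∪ X.image (fun x => -G x),
        ∃ x ∈ X, N = G x ∨ N = -G x := by
      intro N hN
      rcases Finset.mem_union.mp hN with h | h
      · obtain ⟨x, hx, rfl⟩ := Finset.mem_image.mp h; exact ⟨x, hx, Or.inl rfl⟩
      · obtain ⟨x, hx, rfl⟩ := Finset.mem_image.mp h; exact ⟨x, hx, Or.inr rfl⟩
    obtain ⟨x, hx, hMx⟩ := getxy M hM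
    obtain ⟨y, hy, hMy⟩ := getxy M' hM'
    have hxy : x ≠ y := by
      rintro rfl
      rcases hMx with rfl | rfl <;> rcases hMy with rfl | rfl
      · exact h1 rfl
      · exact h2 (by rw [neg_neg])
      · exact h2 rfl
      · exact h1 rfl
    have base := hij x hx y hy hxy
    rcases hMx with rfl | rfl <;> rcases hMy with rfl | rfl <;>
      simpa [Matrix.mul_neg, Matrix.neg_mul, Matrix.trace_neg, abs_neg] using base
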